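/- Let M = k^d for some k ∈ ℕ. Then for every real N ≥ 1 and every η > 0 one has f_N(η) ≤ f_{N/M}(η). -/

import Mathlib

open MeasureTheory Filter Set
open scoped ENNReal NNReal

noncomputable section

abbrev Rd (d : ℕ) := Fin d → ℝ

/-- `nrm` is a norm on `ℝ^d`. -/
def IsNorm {d : ℕ} (nrm : Rd d → ℝ) : Prop :=
  (∀ x, 0 ≤ nrm x) ∧ (∀ x, nrm x = 0 ↔ x = 0) ∧
  (∀ (c : ℝ) (x : Rd d), nrm (c • x) = |c| * nrm x) ∧
  (∀ x y, nrm (x + y) ≤ nrm x + nrm y)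

/-- The standing assumptions on `φ`: increasing, nonnegative, left continuous,
`lim_{t↓0} φ(t) = 0`, and not identically zero on `[0,∞)`. -/
def PhiOK (φ : ℝ → ℝ) : Prop :=
  MonotoneOn φ (Ici 0) ∧ (∀ t, 0 ≤ t → 0 ≤ φ t) ∧
  (∀ t, 0 < t → Tendsto φ (nhdsWithin t (Iio t)) (nhds (φ t))) ∧
  Tendsto φ (nhdsWithin 0 (Ioi 0)) (nhds 0) ∧
  (∃ t, 0 ≤ t ∧ φ t ≠ 0)

/-- distance from a point to a set, `d(x,A) = inf_{y ∈ A} ‖x - y‖`. -/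
def dSet {d : ℕ} (nrm : Rd d → ℝ) (x : Rd d) (A : Set (Rd d)) : ℝ :=
  sInf ((fun y => nrm (x - y)) '' A)

/-- the unit cube `[0,1)^d`. -/
def unitCube (d : ℕ) : Set (Rd d) := univ.pi fun _ => Ico (0:ℝ) 1

/-- `f_N(η) = inf_C E[φ((N/η)^{1/d} d(U,C))]`, infimum over nonempty codebooks of at most
`⌊N⌋` points, `U` uniform on `[0,1)^d`; it is `∞` for `N < 1` (empty infimum). -/
def fNq {d : ℕ} (nrm : Rd d → ℝ) (φ : ℝ → ℝ) (N η : ℝ) : ℝ≥0∞ :=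
  ⨅ (C : Finset (Rd d)) (_ : C.Nonempty) (_ : (C.card : ℝ) ≤ N),
    ∫⁻ x in unitCube d, ENNReal.ofReal (φ ((N / η) ^ (1 / (d:ℝ)) * dSet nrm x (C : Set (Rd d)))) ∂volume

/-- `g(η) = inf_{N ≥ 1} f_N(η)` for `η > 0`, extended by `g(0) = lim_{η↓0} g(η) = sup_{η>0} g(η)`
for `η ≤ 0`. -/
def gq {d : ℕ} (nrm : Rd d → ℝ) (φ : ℝ → ℝ) (η : ℝ) : ℝ≥0∞ :=
  if 0 < η then ⨅ N ∈ Ici (1:ℝ), fNq nrm φ N η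
  else ⨆ η' ∈ Ioi (0:ℝ), ⨅ N ∈ Ici (1:ℝ), fNq nrm φ N η'

/-- the absolutely continuous part `μ_c` of `μ` with respect to Lebesgue measure. -/
def muc {d : ℕ} (μ : Measure (Rd d)) : Measure (Rd d) :=
  volume.withDensity (μ.rnDeriv volume)

/-- Orlicz norm `‖F(X)‖_φ = inf{t > 0 : E[φ(F(X)/t)] ≤ 1}` (as the `sInf` in `ℝ≥0∞`,
so it is `∞` when no such `t` exists), where `X` has law `μ`. -/
def orliczN {d : ℕ} (φ : ℝ → ℝ) (μ : Measure (Rd d)) (F : Rd d → ℝ) : ℝ≥0∞ :=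
  sInf {s : ℝ≥0∞ | ∃ t : ℝ, 0 < t ∧ s = ENNReal.ofReal t ∧
    ∫⁻ x, ENNReal.ofReal (φ (F x / t)) ∂μ ≤ 1}

/-- the quantization error `δ(N|X,φ)`, where `X` has law `μ`. -/
def quantErr {d : ℕ} (nrm : Rd d → ℝ) (φ : ℝ → ℝ) (μ : Measure (Rd d)) (N : ℝ) : ℝ≥0∞ :=
  ⨅ (C : Finset (Rd d)) (_ : C.Nonempty) (_ : (C.card : ℝ) ≤ N),
    orliczN φ μ (fun x => dSet nrm x (C : Set (Rd d)))

/-- `I`, the value of the point allocation problem. -/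
def pav {d : ℕ} (nrm : Rd d → ℝ) (φ : ℝ → ℝ) (μ : Measure (Rd d)) : ℝ≥0∞ :=
  ⨅ (ξ : Rd d → ℝ) (_ : ∀ x, 0 ≤ ξ x) (_ : Integrable ξ volume)
    (_ : ∫⁻ x, gq nrm φ (ξ x) ∂(muc μ) ≤ 1),
    ENNReal.ofReal (∫ x, ξ x)

/-- `ḡ(a) = inf_{η>0} [g(η) + aη]`. -/
def gbarq {d : ℕ} (nrm : Rd d → ℝ) (φ : ℝ → ℝ) (a : ℝ≥0∞) : ℝ≥0∞ :=
  ⨅ η ∈ Ioi (0:ℝ), (gq nrm φ η + a * ENNReal.ofReal η)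


-- Auxiliary lemmas

lemma dSet_nonneg' {d : ℕ} {nrm : Rd d → ℝ} (h0 : ∀ x, 0 ≤ nrm x) (x : Rd d) (A : Set (Rd d)) :
    0 ≤ dSet nrm x A :=
  Real.sInf_nonneg (by rintro z ⟨y, -, rfl⟩; exact h0 _)

lemma dSet_le' {d : ℕ} {nrm : Rd d → ℝ} (h0 : ∀ x, 0 ≤ nrm x) (x : Rd d) {A : Set (Rd d)}
    {y : Rd d} (hy : y ∈ A) : dSet nrm x A ≤ nrm (x - y) :=
  csInf_le ⟨0, by rintro z ⟨w, -, rfl⟩; exact h0 _⟩ ⟨y, hy, rfl⟩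

lemma exists_dSet_eq {d : ℕ} (nrm : Rd d → ℝ) (x : Rd d) (C : Finset (Rd d)) (hC : C.Nonempty) :
    ∃ c ∈ C, dSet nrm x (C : Set (Rd d)) = nrm (x - c) := by
  have hne : ((fun y => nrm (x - y)) '' (C : Set (Rd d))).Nonempty :=
    (hC.to_set).image _
  have hfin : ((fun y => nrm (x - y)) '' (C : Set (Rd d))).Finite :=
    (C.finite_toSet).image _
  obtain ⟨c, hc, hEq⟩ := hne.csInf_mem hfin
  exact ⟨c, hc, hEq.symm⟩

/-- For `M = k^d`, `f_N(η) ≤ f_{N/M}(η)`. -/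
theorem statement8 {d : ℕ} (hd : 0 < d)
    (nrm : Rd d → ℝ) (hnrm : IsNorm nrm) (φ : ℝ → ℝ) (hφ : PhiOK φ)
    (k : ℕ) (hk : 0 < k) (N η : ℝ) (hN : 1 ≤ N) (hη : 0 < η) :
    fNq nrm φ N η ≤ fNq nrm φ (N / (k:ℝ)^d) η := by
  classical
  obtain ⟨h0, hzero, hhom, htri⟩ := hnrm
  have hφmono : MonotoneOn φ (Ici 0) := hφ.1
  have hk0 : (0:ℝ) < k := by exact_mod_cast hk
  have hkne : (k:ℝ) ≠ 0 := ne_of_gt hk0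
  have hM0 : (0:ℝ) < (k:ℝ)^d := by positivity
  set r : ℝ := (N / η) ^ (1 / (d:ℝ)) with hr_def
  set r' : ℝ := (N / (k:ℝ)^d / η) ^ (1 / (d:ℝ)) with hr'_def
  have hr0 : 0 ≤ r := Real.rpow_nonneg (by positivity) _
  have hr'0 : 0 ≤ r' := Real.rpow_nonneg (div_nonneg (div_nonneg (by linarith) hM0.le) hη.le) _
  have hrr' : r' = r * (k:ℝ)⁻¹ := by
    have h1 : N / (k:ℝ)^d / η = (N / η) / (k:ℝ)^d := by ring
    have h2 : ((k:ℝ)^d) ^ (1 / (d:ℝ)) = k := by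
      rw [← Real.rpow_natCast (k:ℝ) d, ← Real.rpow_mul (by positivity)]
      rw [mul_one_div, div_self (by exact_mod_cast hd.ne' : (d:ℝ) ≠ 0), Real.rpow_one]
    rw [hr'_def, h1, Real.div_rpow (by positivity) hM0.le, h2, hr_def, div_eq_mul_inv]
  rw [fNq, fNq]
  refine le_iInf fun C => le_iInf fun hC => le_iInf fun hcard => ?_
  -- the translation vectors and affine maps
  set jv : (Fin d → Fin k) → Rd d := fun j i => ((j i : ℕ) : ℝ) with hjv
  set T : (Fin d → Fin k) → Rd d → Rd d := fun j y => ((k:ℝ)⁻¹) • (y + jv j) with hT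
  set C' : Finset (Rd d) :=
    Finset.image (fun p : (Fin d → Fin k) × Rd d => T p.1 p.2) (Finset.univ ×ˢ C) with hC'def
  have hC' : C'.Nonempty := by
    obtain ⟨c, hc⟩ := hC
    exact ⟨T (fun _ => ⟨0, hk⟩) c, Finset.mem_image.mpr ⟨⟨fun _ => ⟨0, hk⟩, c⟩,
      Finset.mem_product.mpr ⟨Finset.mem_univ _, hc⟩, rfl⟩⟩
  have hcard' : (C'.card : ℝ) ≤ N := by
    have h1 : C'.card ≤ ((Finset.univ : Finset (Fin d → Fin k)) ×ˢ C).card := Finset.card_image_le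
    have h2 : ((Finset.univ : Finset (Fin d → Fin k)) ×ˢ C).card = k ^ d * C.card := by
      simp [Finset.card_product, Fintype.card_fun]
    have h3 : (C'.card : ℝ) ≤ (k:ℝ)^d * C.card := by
      calc (C'.card : ℝ) ≤ ((k ^ d * C.card : ℕ) : ℝ) := by exact_mod_cast h2 ▸ h1
      _ = (k:ℝ)^d * C.card := by push_cast; ring
    calc (C'.card : ℝ) ≤ (k:ℝ)^d * C.card := h3
      _ ≤ (k:ℝ)^d * (N / (k:ℝ)^d) := by
          exact mul_le_mul_of_nonneg_left hcard hM0.le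
      _ = N := by field_simp
  refine iInf_le_of_le C' (iInf_le_of_le hC' (iInf_le_of_le hcard' ?_))
  -- Now the integral inequality
  set Q : (Fin d → Fin k) → Set (Rd d) :=
    fun j => univ.pi fun i => Ico (((j i : ℕ) : ℝ)/k) ((((j i : ℕ) : ℝ)+1)/k) with hQ
  set F : Rd d → ℝ≥0∞ := fun x => ENNReal.ofReal (φ (r * dSet nrm x (C' : Set (Rd d)))) with hF
  set G : Rd d → ℝ≥0∞ := fun y => ENNReal.ofReal (φ (r' * dSet nrm y (C : Set (Rd d)))) with hG
  set I₀ : ℝ≥0∞ := ∫⁻ y in unitCube d, G y ∂volume with hI₀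
  have hQmeas : ∀ j, MeasurableSet (Q j) := fun j =>
    MeasurableSet.univ_pi fun i => measurableSet_Ico
  have hTemb : ∀ j, MeasurableEmbedding (T j) := fun j =>
    ((Homeomorph.addRight (jv j)).trans
      (Homeomorph.smulOfNeZero ((k:ℝ)⁻¹) (inv_ne_zero hkne))).measurableEmbedding
  have hmap : ∀ j, Measure.map (T j) (volume : Measure (Rd d))
      = ENNReal.ofReal ((k:ℝ)^d) • volume := by
    intro j
    have hcomp : T j = (fun z : Rd d => ((k:ℝ)⁻¹) • z) ∘ (fun y => y + jv j) := rfl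
    rw [hcomp, ← Measure.map_map (measurable_const_smul _) (measurable_add_const _)]
    rw [(measurePreserving_add_right (volume : Measure (Rd d)) (jv j)).map_eq]
    rw [Measure.map_addHaar_smul volume (inv_ne_zero hkne)]
    congr 1
    have : Module.finrank ℝ (Rd d) = d := by simp
    rw [this, inv_pow, inv_inv, abs_of_nonneg hM0.le]
  have hTpre : ∀ j, T j ⁻¹' (Q j) = unitCube d := by
    intro j
    ext x
    simp only [hT, hQ, unitCube, mem_preimage, Set.mem_pi, mem_univ, forall_true_left,
      mem_Ico, Pi.smul_apply, Pi.add_apply, smul_eq_mul, true_implies]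
    refine forall_congr' fun i => ?_
    rw [inv_mul_eq_div, div_le_div_iff_of_pos_right hk0, div_lt_div_iff_of_pos_right hk0]
    constructor
    · rintro ⟨h1, h2⟩; constructor <;> linarith
    · rintro ⟨h1, h2⟩; constructor <;> linarith
  have hcover : unitCube d ⊆ ⋃ j, Q j := by
    intro x hx
    simp only [unitCube, Set.mem_pi, mem_univ, true_implies, mem_Ico] at hx
    have hfl : ∀ i, (0:ℤ) ≤ ⌊(k:ℝ) * x i⌋ := fun i =>
      Int.floor_nonneg.mpr (mul_nonneg hk0.le (hx i).1)
    have hflt : ∀ i, ⌊(k:ℝ) * x i⌋ < (k:ℤ) := by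
      intro i
      have : (k:ℝ) * x i < k := by nlinarith [(hx i).2]
      exact_mod_cast Int.floor_lt.mpr (by exact_mod_cast this)
    refine mem_iUnion.mpr ⟨fun i => ⟨(⌊(k:ℝ) * x i⌋).toNat,
        by have h1 := hfl i; have h2 := hflt i; omega⟩, ?_⟩
    · simp only [hQ, Set.mem_pi, mem_univ, true_implies, mem_Ico]
      intro i
      have hcast : (((⌊(k:ℝ) * x i⌋).toNat : ℕ) : ℝ) = (⌊(k:ℝ) * x i⌋ : ℝ) := by
        exact_mod_cast Int.toNat_of_nonneg (hfl i)
      rw [hcast]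
      constructor
      · rw [div_le_iff₀ hk0]
        calc ((⌊(k:ℝ) * x i⌋ : ℝ)) ≤ (k:ℝ) * x i := Int.floor_le _
          _ = x i * k := by ring
      · rw [lt_div_iff₀ hk0]
        calc x i * k = (k:ℝ) * x i := by ring
          _ < ⌊(k:ℝ) * x i⌋ + 1 := Int.lt_floor_add_one _
  -- pointwise inequality: F x ≤ G ((k:ℝ) • x - jv j) for all x, j
  have hpt : ∀ (j : Fin d → Fin k) (x : Rd d), F x ≤ G ((k:ℝ) • x - jv j) := by
    intro j x
    obtain ⟨c, hc, hdc⟩ := exists_dSet_eq nrm ((k:ℝ) • x - jv j) C hC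
    have hmem : T j c ∈ (C' : Set (Rd d)) := Finset.mem_coe.mpr
      (Finset.mem_image.mpr ⟨⟨j, c⟩, Finset.mem_product.mpr ⟨Finset.mem_univ _, hc⟩, rfl⟩)
    have hkey : dSet nrm x (C' : Set (Rd d)) ≤ (k:ℝ)⁻¹ * dSet nrm ((k:ℝ) • x - jv j) (C : Set (Rd d)) := by
      have h1 : dSet nrm x (C' : Set (Rd d)) ≤ nrm (x - T j c) := dSet_le' h0 x hmem
      have h2 : x - T j c = ((k:ℝ)⁻¹) • (((k:ℝ) • x - jv j) - c) := by
        simp only [hT]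
        rw [smul_sub, smul_sub, smul_smul, inv_mul_cancel₀ hkne, one_smul, smul_add]
        abel
      rw [h2, hhom] at h1
      rw [hdc]
      calc dSet nrm x (C' : Set (Rd d)) ≤ |(k:ℝ)⁻¹| * nrm ((k:ℝ) • x - jv j - c) := h1
        _ = (k:ℝ)⁻¹ * nrm ((k:ℝ) • x - jv j - c) := by
            rw [abs_of_nonneg (by positivity)]
    have harg : r * dSet nrm x (C' : Set (Rd d)) ≤ r' * dSet nrm ((k:ℝ) • x - jv j) (C : Set (Rd d)) := by
      calc r * dSet nrm x (C' : Set (Rd d))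
          ≤ r * ((k:ℝ)⁻¹ * dSet nrm ((k:ℝ) • x - jv j) (C : Set (Rd d))) :=
            mul_le_mul_of_nonneg_left hkey hr0
        _ = r' * dSet nrm ((k:ℝ) • x - jv j) (C : Set (Rd d)) := by rw [hrr']; ring
    have hn1 : 0 ≤ r * dSet nrm x (C' : Set (Rd d)) :=
      mul_nonneg hr0 (dSet_nonneg' h0 _ _)
    have hn2 : 0 ≤ r' * dSet nrm ((k:ℝ) • x - jv j) (C : Set (Rd d)) :=
      mul_nonneg hr'0 (dSet_nonneg' h0 _ _)
    exact ENNReal.ofReal_le_ofReal (hφmono hn1 hn2 harg)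
  -- change of variables on each subcube
  have hcv : ∀ j, ENNReal.ofReal ((k:ℝ)^d) * ∫⁻ x in Q j, G ((k:ℝ) • x - jv j) ∂volume = I₀ := by
    intro j
    set Gj : Rd d → ℝ≥0∞ := fun x => G ((k:ℝ) • x - jv j) with hGj
    have hTval : ∀ y, (k:ℝ) • (T j y) - jv j = y := by
      intro y
      simp only [hT, smul_smul, mul_inv_cancel₀ hkne, one_smul]
      abel
    calc ENNReal.ofReal ((k:ℝ)^d) * ∫⁻ x in Q j, Gj x ∂volume
        = ∫⁻ x in Q j, Gj x ∂(ENNReal.ofReal ((k:ℝ)^d) • volume) := by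
          rw [Measure.restrict_smul, lintegral_smul_measure, smul_eq_mul]
      _ = ∫⁻ x in Q j, Gj x ∂(Measure.map (T j) volume) := by rw [hmap j]
      _ = ∫⁻ x, Gj x ∂((Measure.map (T j) volume).restrict (Q j)) := rfl
      _ = ∫⁻ x, Gj x ∂(Measure.map (T j) (volume.restrict (T j ⁻¹' Q j))) := by
          rw [Measure.restrict_map (hTemb j).measurable (hQmeas j)]
      _ = ∫⁻ y, Gj (T j y) ∂(volume.restrict (T j ⁻¹' Q j)) := (hTemb j).lintegral_map Gj
      _ = ∫⁻ y in unitCube d, Gj (T j y) ∂volume := by rw [hTpre j]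
      _ = I₀ := by
          refine lintegral_congr fun y => ?_
          simp only [hGj, hTval y]
  -- put it together
  calc ∫⁻ x in unitCube d, F x ∂volume
      ≤ ∫⁻ x in ⋃ j, Q j, F x ∂volume := lintegral_mono_set hcover
    _ ≤ ∑' j, ∫⁻ x in Q j, F x ∂volume := lintegral_iUnion_le _ _
    _ ≤ ∑' j, ∫⁻ x in Q j, G ((k:ℝ) • x - jv j) ∂volume := by
        exact ENNReal.tsum_le_tsum fun j => lintegral_mono fun x => hpt j x
    _ ≤ ∑' (j : Fin d → Fin k), (ENNReal.ofReal ((k:ℝ)^d))⁻¹ * I₀ := by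
        refine ENNReal.tsum_le_tsum fun j => ?_
        rw [← hcv j, ← mul_assoc, ENNReal.inv_mul_cancel (by positivity) ENNReal.ofReal_ne_top, one_mul]
    _ = I₀ := by
        rw [tsum_fintype, Finset.sum_const, Finset.card_univ, Fintype.card_fun, Fintype.card_fin,
          Fintype.card_fin, nsmul_eq_mul, ← mul_assoc]
        have : ((k ^ d : ℕ) : ℝ≥0∞) * (ENNReal.ofReal ((k:ℝ)^d))⁻¹ = 1 := by
          have hcast : ENNReal.ofReal ((k:ℝ)^d) = ((k ^ d : ℕ) : ℝ≥0∞) := by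
            rw [show ((k:ℝ)^d) = ((k^d : ℕ) : ℝ) by push_cast; ring, ENNReal.ofReal_natCast]
          rw [hcast, ENNReal.mul_inv_cancel (by exact_mod_cast (pow_pos hk d).ne') (by simp)]
        rw [this, one_mul]


end
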